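/- If X is a fuzzy tree whose underlying graph is not a tree, then there exists at least one edge uv such that SDI(X \ uv) = SDI(X). -/

import Mathlib

open Finset

/-- A fuzzy graph on vertex type `V`. -/
structure FuzzyGraph (V : Type*) where
  ρ : V → ℝ
  υ : V → V → ℝ
  ρ_nonneg : ∀ a, 0 ≤ ρ a
  ρ_le_one : ∀ a, ρ a ≤ 1
  υ_nonneg : ∀ a b, 0 ≤ υ a b
  symm : ∀ a b, υ a b = υ b a
  υ_le : ∀ a b, υ a b ≤ min (ρ a) (ρ b)
  loopless : ∀ a, υ a a = 0

namespace FuzzyGraph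

variable {V : Type*} [Fintype V] [DecidableEq V]

/-- Strength of a path given by its list of successive vertices:
the minimum of the weights of its edges. -/
def pathStrength (X : FuzzyGraph V) : List V → ℝ
  | [] => 0
  | [_] => 0
  | [a, b] => X.υ a b
  | a :: b :: c :: l => min (X.υ a b) (X.pathStrength (b :: c :: l))

/-- `l` is a path from `a` to `b` : distinct vertices joined by positive-weight edges. -/
def IsPath (X : FuzzyGraph V) (a b : V) (l : List V) : Prop :=
  l.Nodup ∧ l.head? = some a ∧ l.getLast? = some b ∧ 2 ≤ l.length ∧
    l.Chain' (fun x y => 0 < X.υ x y)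

/-- Strength of connectedness between two vertices: maximum strength of a path. -/
noncomputable def conn (X : FuzzyGraph V) (a b : V) : ℝ :=
  sSup {s | ∃ l : List V, X.IsPath a b l ∧ s = X.pathStrength l}

/-- Delete the edge `ab` (set its weight to `0`). -/
def deleteEdge (X : FuzzyGraph V) (a b : V) : FuzzyGraph V where
  ρ := X.ρ
  υ x y := if (x = a ∧ y = b) ∨ (x = b ∧ y = a) then 0 else X.υ x y
  ρ_nonneg := X.ρ_nonneg
  ρ_le_one := X.ρ_le_one
  υ_nonneg := by
    intro x y; split_ifs
    · exact le_rfl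
    · exact X.υ_nonneg x y
  symm := by
    intro x y
    by_cases h : (x = a ∧ y = b) ∨ (x = b ∧ y = a)
    · rw [if_pos h, if_pos (by tauto)]
    · rw [if_neg h, if_neg (by tauto), X.symm]
  υ_le := by
    intro x y; split_ifs
    · exact le_min (X.ρ_nonneg x) (X.ρ_nonneg y)
    · exact X.υ_le x y
  loopless := by
    intro x; split_ifs
    · rfl
    · exact X.loopless x

/-- `ab` is a strong edge (α- or β-strong). -/
def StrongEdge (X : FuzzyGraph V) (a b : V) : Prop :=
  0 < X.υ a b ∧ (X.deleteEdge a b).conn a b ≤ X.υ a b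

/-- `ab` is an α-strong edge. -/
def AlphaStrong (X : FuzzyGraph V) (a b : V) : Prop :=
  0 < X.υ a b ∧ (X.deleteEdge a b).conn a b < X.υ a b

/-- `ab` is a β-strong edge. -/
def BetaStrong (X : FuzzyGraph V) (a b : V) : Prop :=
  0 < X.υ a b ∧ X.υ a b = (X.deleteEdge a b).conn a b

/-- `ab` is a δ-edge. -/
def DeltaEdge (X : FuzzyGraph V) (a b : V) : Prop :=
  0 < X.υ a b ∧ X.υ a b < (X.deleteEdge a b).conn a b

/-- The minimum weight of a strong edge incident at `a`. -/
noncomputable def minInc (X : FuzzyGraph V) (a : V) : ℝ :=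
  sInf {w | ∃ b, X.StrongEdge a b ∧ w = X.υ a b}

/-- The weight of a set of vertices. -/
noncomputable def weight (X : FuzzyGraph V) (S : Finset V) : ℝ :=
  ∑ a ∈ S, X.minInc a

/-- `D` is a strong dominating set. -/
def IsSDS (X : FuzzyGraph V) (D : Finset V) : Prop :=
  ∀ v, v ∉ D → ∃ a ∈ D, X.StrongEdge a v

/-- `D` is a minimal strong dominating set. -/
def IsMinimalSDS (X : FuzzyGraph V) (D : Finset V) : Prop :=
  X.IsSDS D ∧ ∀ a ∈ D, ¬ X.IsSDS (D.erase a)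

/-- `D` is a minimum (least weight) strong dominating set. -/
def IsMinimumSDS (X : FuzzyGraph V) (D : Finset V) : Prop :=
  X.IsSDS D ∧ ∀ D' : Finset V, X.IsSDS D' → X.weight D ≤ X.weight D'

/-- The strong domination degree of a vertex. -/
noncomputable def sd (X : FuzzyGraph V) (u : V) : ℝ :=
  sInf {w | ∃ D : Finset V, X.IsMinimalSDS D ∧ u ∈ D ∧ w = X.weight D}

/-- The strong domination number. -/
noncomputable def gammaS (X : FuzzyGraph V) : ℝ :=
  sInf {w | ∃ D : Finset V, X.IsSDS D ∧ w = X.weight D}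

/-- The upper strong domination number. -/
noncomputable def GammaS (X : FuzzyGraph V) : ℝ :=
  sSup {w | ∃ D : Finset V, X.IsMinimalSDS D ∧ w = X.weight D}

/-- The strong domination index. -/
noncomputable def SDI (X : FuzzyGraph V) : ℝ := ∑ u : V, X.sd u

/-- `X` is connected. -/
def Connected (X : FuzzyGraph V) : Prop := ∀ a b : V, a ≠ b → ∃ l, X.IsPath a b l

/-- `X` is a strong fuzzy graph: every edge is strong. -/
def IsStrongFG (X : FuzzyGraph V) : Prop := ∀ a b, 0 < X.υ a b → X.StrongEdge a b

/-- Underlying (support) simple graph. -/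
def support (X : FuzzyGraph V) : SimpleGraph V where
  Adj a b := 0 < X.υ a b
  symm := by constructor; intro a b h; rw [X.symm]; exact h
  loopless := by constructor; intro a h; rw [X.loopless] at h; exact lt_irrefl 0 h

/-- `X` is a fuzzy tree. -/
def IsFuzzyTree (X : FuzzyGraph V) : Prop :=
  ∃ F : FuzzyGraph V, F.ρ = X.ρ ∧ (∀ a b, F.υ a b = X.υ a b ∨ F.υ a b = 0) ∧
    F.support.IsTree ∧ ∀ a b, 0 < X.υ a b → F.υ a b = 0 → X.υ a b < F.conn a b

/-- The size of a fuzzy graph: the sum of all edge weights. -/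
noncomputable def size (X : FuzzyGraph V) : ℝ := (∑ a : V, ∑ b : V, X.υ a b) / 2

/-- The underlying graph of `X` is a cycle. -/
def IsCycleGraph (X : FuzzyGraph V) : Prop :=
  ∃ n : ℕ, 3 ≤ n ∧ ∃ f : ZMod n ≃ V,
    ∀ x y : V, 0 < X.υ x y ↔ ∃ i : ZMod n, (x = f i ∧ y = f (i + 1)) ∨ (x = f (i + 1) ∧ y = f i)

/-- `X` is a fuzzy cycle: a cycle with at least two edges of minimum weight. -/
def IsFuzzyCycle (X : FuzzyGraph V) : Prop :=
  X.IsCycleGraph ∧ ∃ a b c d : V, 0 < X.υ a b ∧ 0 < X.υ c d ∧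
    Sym2.mk (a, b) ≠ Sym2.mk (c, d) ∧ X.υ a b = X.υ c d ∧
    ∀ x y, 0 < X.υ x y → X.υ a b ≤ X.υ x y

/-- A set of pairwise fuzzy independent vertices. -/
def IsFuzzyIndep (X : FuzzyGraph V) (S : Finset V) : Prop :=
  ∀ a ∈ S, ∀ b ∈ S, a ≠ b → ¬ X.StrongEdge a b

/-- The strong independent domination number. -/
noncomputable def iS (X : FuzzyGraph V) : ℝ :=
  sInf {w | ∃ D : Finset V, X.IsSDS D ∧ X.IsFuzzyIndep D ∧ w = X.weight D}

/-- The strong independence number. -/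
noncomputable def betaS (X : FuzzyGraph V) : ℝ :=
  sSup {w | ∃ S : Finset V, X.IsFuzzyIndep S ∧ w = X.weight S}

/-- Closed strong neighborhood. -/
def closedNbhd (X : FuzzyGraph V) (a : V) : Set V := insert a {b | X.StrongEdge a b}

/-- Open strong neighborhood. -/
def openNbhd (X : FuzzyGraph V) (a : V) : Set V := {b | X.StrongEdge a b}

/-- Private neighborhood of `a` with respect to `S`. -/
def privNbhd (X : FuzzyGraph V) (a : V) (S : Finset V) : Set V :=
  X.closedNbhd a \ ⋃ b ∈ S.erase a, X.closedNbhd b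

/-- `S` is a fuzzy irredundant set. -/
def IsIrredundant (X : FuzzyGraph V) (S : Finset V) : Prop :=
  ∀ a ∈ S, (X.privNbhd a S).Nonempty

/-- `S` is a maximal fuzzy irredundant set. -/
def IsMaximalIrredundant (X : FuzzyGraph V) (S : Finset V) : Prop :=
  X.IsIrredundant S ∧ ∀ v ∉ S, ¬ X.IsIrredundant (insert v S)

/-- The strong irredundance number. -/
noncomputable def irS (X : FuzzyGraph V) : ℝ :=
  sInf {w | ∃ S : Finset V, X.IsMaximalIrredundant S ∧ w = X.weight S}

end FuzzyGraph
set_option linter.unusedSectionVars false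
set_option maxHeartbeats 1000000

namespace FuzzyGraph

variable {V : Type*} [Fintype V] [DecidableEq V]

lemma pathStrength_nonneg (Y : FuzzyGraph V) : ∀ l : List V, 0 ≤ Y.pathStrength l
  | [] => le_rfl
  | [_] => le_rfl
  | [a, b] => Y.υ_nonneg a b
  | a :: b :: c :: l => le_min (Y.υ_nonneg a b) (pathStrength_nonneg Y (b :: c :: l))

lemma le_pathStrength_iff (Y : FuzzyGraph V) (s : ℝ) :
    ∀ l : List V, 2 ≤ l.length →
      (s ≤ Y.pathStrength l ↔ l.Chain' (fun u v => s ≤ Y.υ u v))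
  | [], h => by simp at h
  | [_], h => by simp at h
  | [a, b], _ => by simp [pathStrength, List.Chain', List.isChain_cons_cons]
  | a :: b :: c :: l, _ => by
    have ih := le_pathStrength_iff Y s (b :: c :: l) (by simp)
    simp only [pathStrength, le_min_iff, List.Chain', List.isChain_cons_cons, ih]

lemma strengthSet_finite (Y : FuzzyGraph V) (x y : V) :
    {s | ∃ l : List V, Y.IsPath x y l ∧ s = Y.pathStrength l}.Finite := by
  have h1 : {l : List V | l.length ≤ Fintype.card V}.Finite := List.finite_length_le V _
  apply ((h1.image Y.pathStrength).subset)
  rintro s ⟨l, hl, rfl⟩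
  exact ⟨l, hl.1.length_le_card, rfl⟩

lemma conn_nonneg (Y : FuzzyGraph V) (x y : V) : 0 ≤ Y.conn x y :=
  Real.sSup_nonneg (by rintro s ⟨l, _, rfl⟩; exact Y.pathStrength_nonneg l)

lemma isPath_ne (Y : FuzzyGraph V) {x y : V} {l : List V} (h : Y.IsPath x y l) : x ≠ y := by
  obtain ⟨hnd, hh, hlast, hlen, _⟩ := h
  rintro rfl
  match l, hnd, hh, hlast, hlen with
  | a :: b :: t, hnd, hh, hlast, _ =>
    have ha : a = x := by simpa using hh
    subst ha
    obtain ⟨h1, h2⟩ := List.mem_getLast?_eq_getLast (l := a :: b :: t) (x := a) hlast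
    rw [List.getLast_cons (by simp)] at h2
    exact (List.nodup_cons.mp hnd).1 (h2 ▸ List.getLast_mem _)

/-- Threshold graph: edges of weight at least `s`. -/
def thrGraph (Y : FuzzyGraph V) (s : ℝ) : SimpleGraph V where
  Adj u v := s ≤ Y.υ u v ∧ 0 < Y.υ u v
  symm := by constructor; intro u v ⟨h1, h2⟩; rw [Y.symm]; exact ⟨h1, h2⟩
  loopless := by constructor; intro u ⟨h1, h2⟩; rw [Y.loopless] at h2; exact lt_irrefl 0 h2

lemma chain'_reflTransGen {α : Type*} (r : α → α → Prop) :
    ∀ (l : List α) (x y : α), l.Chain' r → l.head? = some x → l.getLast? = some y →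
      Relation.ReflTransGen r x y
  | [], x, y, _, h, _ => by simp at h
  | [a], x, y, _, hh, hl => by
    have h1 : a = x := by simpa using hh
    have h2 : a = y := by simpa using hl
    subst h1; subst h2
    exact Relation.ReflTransGen.refl
  | a :: b :: t, x, y, hc, hh, hl => by
    have hax : a = x := by simpa using hh
    subst hax
    have hbt : (b :: t).getLast? = some y := by
      rw [← hl, List.getLast?_cons_cons]
    obtain ⟨h1, h2⟩ := List.isChain_cons_cons.mp hc
    exact Relation.ReflTransGen.head h1
      (chain'_reflTransGen r (b :: t) b y h2 rfl hbt)

end FuzzyGraph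
namespace FuzzyGraph

variable {V : Type*} [Fintype V] [DecidableEq V]

lemma chain'_and {α : Type*} {r q : α → α → Prop} :
    ∀ {l : List α}, l.Chain' r → l.Chain' q → l.Chain' (fun a b => r a b ∧ q a b)
  | [], _, _ => List.isChain_nil
  | [_], _, _ => List.isChain_singleton _
  | _ :: _ :: _, hr, hq => List.isChain_cons_cons.mpr
      ⟨⟨(List.isChain_cons_cons.mp hr).1, (List.isChain_cons_cons.mp hq).1⟩,
        chain'_and (List.isChain_cons_cons.mp hr).2 (List.isChain_cons_cons.mp hq).2⟩

lemma conn_ge_iff (Y : FuzzyGraph V) (x y : V) (s : ℝ) (hs : 0 < s) :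
    s ≤ Y.conn x y ↔ x ≠ y ∧ (Y.thrGraph s).Reachable x y := by
  constructor
  · intro h
    have hne : {t | ∃ l : List V, Y.IsPath x y l ∧ t = Y.pathStrength l}.Nonempty := by
      by_contra hne
      rw [Set.not_nonempty_iff_eq_empty] at hne
      rw [conn, hne, Real.sSup_empty] at h
      linarith
    have hmem := hne.csSup_mem (Y.strengthSet_finite x y)
    obtain ⟨l, hp, heq⟩ := hmem
    have hsl : s ≤ Y.pathStrength l := heq ▸ h
    refine ⟨Y.isPath_ne hp, ?_⟩
    rw [SimpleGraph.reachable_iff_reflTransGen]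
    have hc1 : l.Chain' (fun u v => s ≤ Y.υ u v) :=
      (Y.le_pathStrength_iff s l hp.2.2.2.1).mp hsl
    have hc2 : l.Chain' (fun u v => 0 < Y.υ u v) := hp.2.2.2.2
    exact chain'_reflTransGen _ l x y (chain'_and hc1 hc2) hp.2.1 hp.2.2.1
  · rintro ⟨hne, hr⟩
    obtain ⟨w⟩ := hr
    set p := w.toPath with hp
    set l := p.1.support with hl
    have hnd : l.Nodup := p.2.support_nodup
    have hhead : l.head? = some x := by
      rw [hl, SimpleGraph.Walk.support_eq_cons]; rfl
    have hlast : l.getLast? = some y := by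
      rw [List.getLast?_eq_head?_reverse, hl, ← SimpleGraph.Walk.support_reverse,
        SimpleGraph.Walk.support_eq_cons]; rfl
    have hlen : 2 ≤ l.length := by
      rw [hl, SimpleGraph.Walk.length_support]
      have : p.1.length ≠ 0 := fun h0 => hne (SimpleGraph.Walk.eq_of_length_eq_zero h0)
      omega
    have hadj : l.Chain' ((Y.thrGraph s).Adj) := p.1.isChain_adj_support
    have hc2 : l.Chain' (fun u v => 0 < Y.υ u v) := hadj.imp (fun _ _ h => h.2)
    have hc1 : l.Chain' (fun u v => s ≤ Y.υ u v) := hadj.imp (fun _ _ h => h.1)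
    have hps : s ≤ Y.pathStrength l := (Y.le_pathStrength_iff s l hlen).mpr hc1
    have hIsP : Y.IsPath x y l := ⟨hnd, hhead, hlast, hlen, hc2⟩
    calc s ≤ Y.pathStrength l := hps
    _ ≤ Y.conn x y := le_csSup (Y.strengthSet_finite x y).bddAbove ⟨l, hIsP, rfl⟩

lemma conn_comm (Y : FuzzyGraph V) (x y : V) : Y.conn x y = Y.conn y x := by
  have key : ∀ u v : V, Y.conn u v ≤ Y.conn v u := by
    intro u v
    rcases le_or_gt (Y.conn u v) 0 with h | h
    · exact h.trans (Y.conn_nonneg v u)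
    · obtain ⟨hne, hr⟩ := (Y.conn_ge_iff u v _ h).mp le_rfl
      exact (Y.conn_ge_iff v u _ h).mpr ⟨hne.symm, hr.symm⟩
  exact le_antisymm (key x y) (key y x)

lemma conn_mono {Y₁ Y₂ : FuzzyGraph V} (h : ∀ u v, Y₁.υ u v ≤ Y₂.υ u v) (x y : V) :
    Y₁.conn x y ≤ Y₂.conn x y := by
  rcases le_or_gt (Y₁.conn x y) 0 with h0 | h0
  · exact h0.trans (Y₂.conn_nonneg x y)
  · obtain ⟨hne, hr⟩ := (Y₁.conn_ge_iff x y _ h0).mp le_rfl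
    refine (Y₂.conn_ge_iff x y _ h0).mpr ⟨hne, hr.mono ?_⟩
    intro u v ⟨h1, h2⟩
    exact ⟨h1.trans (h u v), h2.trans_le (h u v)⟩

lemma reachable_of_adj_reachable {G G' : SimpleGraph V}
    (h : ∀ u v, G.Adj u v → G'.Reachable u v) {x y : V} (hr : G.Reachable x y) :
    G'.Reachable x y := by
  rw [SimpleGraph.reachable_iff_reflTransGen] at hr
  induction hr with
  | refl => exact SimpleGraph.Reachable.refl x
  | tail _ hadj ih => exact ih.trans (h _ _ hadj)

end FuzzyGraph
namespace FuzzyGraph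

variable {V : Type*} [Fintype V] [DecidableEq V]

lemma ext' {Y₁ Y₂ : FuzzyGraph V} (hρ : Y₁.ρ = Y₂.ρ) (hυ : Y₁.υ = Y₂.υ) : Y₁ = Y₂ := by
  cases Y₁; cases Y₂; cases hρ; cases hυ; rfl

lemma deleteEdge_comm (X : FuzzyGraph V) (a b : V) :
    X.deleteEdge a b = X.deleteEdge b a := by
  refine ext' rfl ?_
  funext x y
  show (if (x = a ∧ y = b) ∨ (x = b ∧ y = a) then 0 else X.υ x y) =
    (if (x = b ∧ y = a) ∨ (x = a ∧ y = b) then 0 else X.υ x y)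
  rw [if_congr (Iff.intro Or.symm Or.symm) rfl rfl]

lemma deleteEdge_υ_eq (X : FuzzyGraph V) (a b x y : V)
    (h : ¬((x = a ∧ y = b) ∨ (x = b ∧ y = a))) :
    (X.deleteEdge a b).υ x y = X.υ x y := if_neg h

lemma deleteEdge_υ_le (X : FuzzyGraph V) (a b x y : V) :
    (X.deleteEdge a b).υ x y ≤ X.υ x y := by
  show (if (x = a ∧ y = b) ∨ (x = b ∧ y = a) then 0 else X.υ x y) ≤ X.υ x y
  split_ifs
  · exact X.υ_nonneg x y
  · exact le_rfl

end FuzzyGraph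

/-- If X is a fuzzy tree whose underlying graph is not a tree,
then some edge uv satisfies SDI(X \ uv) = SDI(X). -/
theorem FuzzyGraph.exists_deleteEdge_SDI_eq {V : Type*} [Fintype V] [DecidableEq V]
    (X : FuzzyGraph V) (hX : X.IsFuzzyTree) (hnt : ¬ X.support.IsTree) :
    ∃ u v : V, 0 < X.υ u v ∧ (X.deleteEdge u v).SDI = X.SDI := by
  classical
  obtain ⟨F, hρ, hdich, htree, hδ⟩ := hX
  -- there is an edge of X not in F
  have hex : ∃ a b, 0 < X.υ a b ∧ F.υ a b = 0 := by
    by_contra h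
    push_neg at h
    apply hnt
    have hsupp : X.support = F.support := by
      ext u v
      show 0 < X.υ u v ↔ 0 < F.υ u v
      constructor
      · intro hx
        rcases hdich u v with h1 | h1
        · rw [h1]; exact hx
        · exact absurd h1 (h u v hx)
      · intro hf
        rcases hdich u v with h1 | h1
        · rwa [h1] at hf
        · rw [h1] at hf; exact absurd hf (lt_irrefl 0)
    rw [hsupp]; exact htree
  obtain ⟨a, b, hab, hFab⟩ := hex
  refine ⟨a, b, hab, ?_⟩
  set X' := X.deleteEdge a b with hX'
  have hFba : F.υ b a = 0 := by rw [F.symm b a]; exact hFab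
  have hlt : X.υ a b < F.conn a b := hδ a b hab hFab
  have hFX : ∀ u v, 0 < F.υ u v → F.υ u v = X.υ u v := by
    intro u v hpos
    rcases hdich u v with h1 | h1
    · exact h1
    · rw [h1] at hpos; exact absurd hpos (lt_irrefl 0)
  have hυ' : ∀ u v, ¬((u = a ∧ v = b) ∨ (u = b ∧ v = a)) → X'.υ u v = X.υ u v :=
    fun u v h => X.deleteEdge_υ_eq a b u v h
  have hυ'le : ∀ u v, X'.υ u v ≤ X.υ u v := fun u v => X.deleteEdge_υ_le a b u v
  -- a,b is a δ-edge: deleting it leaves higher connectivity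
  have hconn' : X.υ a b < X'.conn a b := by
    set t := F.conn a b with ht
    have ht0 : 0 < t := hab.trans hlt
    obtain ⟨hne, hrF⟩ := (F.conn_ge_iff a b t ht0).mp le_rfl
    have hle : F.thrGraph t ≤ X'.thrGraph t := by
      intro u v huv
      obtain ⟨k1, k2⟩ := huv
      have hFuv : F.υ u v = X.υ u v := hFX u v k2
      have hpair : ¬((u = a ∧ v = b) ∨ (u = b ∧ v = a)) := by
        rintro (⟨rfl, rfl⟩ | ⟨rfl, rfl⟩)
        · rw [hFab] at k2; exact absurd k2 (lt_irrefl 0)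
        · rw [hFba] at k2; exact absurd k2 (lt_irrefl 0)
      have : X'.υ u v = F.υ u v := by rw [hυ' u v hpair, hFuv]
      exact ⟨this ▸ k1, this ▸ k2⟩
    have : t ≤ X'.conn a b := (X'.conn_ge_iff a b t ht0).mpr ⟨hne, hrF.mono hle⟩
    exact hlt.trans_le this
  have hnSab : ¬ X.StrongEdge a b := by
    rintro ⟨_, h2⟩
    exact absurd (hconn'.trans_le h2) (lt_irrefl _)
  have hnSba : ¬ X.StrongEdge b a := by
    rintro ⟨_, h2⟩
    rw [X.deleteEdge_comm b a, conn_comm, ← X.symm a b] at h2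
    exact absurd (hconn'.trans_le h2) (lt_irrefl _)
  -- strong edges are preserved
  have hSE : ∀ x y, X.StrongEdge x y ↔ X'.StrongEdge x y := by
    intro x y
    by_cases hpair : (x = a ∧ y = b) ∨ (x = b ∧ y = a)
    · have hX'0 : X'.υ x y = 0 := if_pos hpair
      refine iff_of_false ?_ ?_
      · rcases hpair with ⟨rfl, rfl⟩ | ⟨rfl, rfl⟩
        · exact hnSab
        · exact hnSba
      · rintro ⟨h1, _⟩
        rw [hX'0] at h1; exact absurd h1 (lt_irrefl 0)
    · have hw' : X'.υ x y = X.υ x y := hυ' x y hpair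
      constructor
      · rintro ⟨hpos, hcle⟩
        refine ⟨hw' ▸ hpos, ?_⟩
        rw [hw']
        refine le_trans (conn_mono ?_ x y) hcle
        intro u v
        show (X'.deleteEdge x y).υ u v ≤ (X.deleteEdge x y).υ u v
        by_cases h : (u = x ∧ v = y) ∨ (u = y ∧ v = x)
        · rw [show (X'.deleteEdge x y).υ u v = 0 from if_pos h]
          exact (X.deleteEdge x y).υ_nonneg u v
        · rw [X'.deleteEdge_υ_eq x y u v h, X.deleteEdge_υ_eq x y u v h]
          exact hυ'le u v
      · rintro ⟨hpos', hcle'⟩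
        have hpos : 0 < X.υ x y := hw' ▸ hpos'
        refine ⟨hpos, ?_⟩
        by_contra hgt
        push_neg at hgt
        set c := (X.deleteEdge x y).conn x y with hc
        have hc0 : 0 < c := hpos.trans hgt
        obtain ⟨hxyne, hrH⟩ := ((X.deleteEdge x y).conn_ge_iff x y c hc0).mp le_rfl
        have htrans : ∀ u v, ((X.deleteEdge x y).thrGraph c).Adj u v →
            ((X'.deleteEdge x y).thrGraph c).Reachable u v := by
          intro u v huv
          obtain ⟨k1, k2⟩ := huv
          have hpxy : ¬((u = x ∧ v = y) ∨ (u = y ∧ v = x)) := by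
            intro h
            have h0 : (X.deleteEdge x y).υ u v = 0 := if_pos h
            rw [h0] at k2
            exact absurd k2 (lt_irrefl 0)
          have hk1 : c ≤ X.υ u v := by rwa [X.deleteEdge_υ_eq x y u v hpxy] at k1
          by_cases hab2 : (u = a ∧ v = b) ∨ (u = b ∧ v = a)
          · -- replace the deleted edge by a path in F
            have hcab : c ≤ X.υ a b := by
              rcases hab2 with ⟨rfl, rfl⟩ | ⟨rfl, rfl⟩
              · exact hk1
              · rwa [X.symm] at hk1
            set t := F.conn a b with ht
            have ht0 : 0 < t := hab.trans hlt
            obtain ⟨hneab, hrF⟩ := (F.conn_ge_iff a b t ht0).mp le_rfl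
            have hle : F.thrGraph t ≤ (X'.deleteEdge x y).thrGraph c := by
              intro p q hpq
              obtain ⟨m1, m2⟩ := hpq
              have hFpq : F.υ p q = X.υ p q := hFX p q m2
              have hpab : ¬((p = a ∧ q = b) ∨ (p = b ∧ q = a)) := by
                rintro (⟨rfl, rfl⟩ | ⟨rfl, rfl⟩)
                · rw [hFab] at m2; exact absurd m2 (lt_irrefl 0)
                · rw [hFba] at m2; exact absurd m2 (lt_irrefl 0)
              have hpxy2 : ¬((p = x ∧ q = y) ∨ (p = y ∧ q = x)) := by
                rintro (⟨he1, he2⟩ | ⟨he1, he2⟩)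
                · have h1 : t ≤ X.υ x y := by
                    rw [he1, he2] at m1 hFpq; exact hFpq ▸ m1
                  linarith
                · have h1 : t ≤ X.υ x y := by
                    rw [he1, he2] at m1 hFpq
                    rw [X.symm x y]; exact hFpq ▸ m1
                  linarith
              have heq : (X'.deleteEdge x y).υ p q = F.υ p q := by
                rw [X'.deleteEdge_υ_eq x y p q hpxy2, hυ' p q hpab, hFpq]
              refine ⟨?_, ?_⟩ <;> rw [heq]
              · exact le_trans (le_of_lt (lt_of_le_of_lt hcab hlt)) m1
              · exact m2
            have hrab : ((X'.deleteEdge x y).thrGraph c).Reachable a b := hrF.mono hle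
            rcases hab2 with ⟨rfl, rfl⟩ | ⟨rfl, rfl⟩
            · exact hrab
            · exact hrab.symm
          · have heq : (X'.deleteEdge x y).υ u v = X.υ u v := by
              rw [X'.deleteEdge_υ_eq x y u v hpxy, hυ' u v hab2]
            refine SimpleGraph.Adj.reachable ?_
            refine ⟨?_, ?_⟩ <;> rw [heq]
            · exact hk1
            · exact hc0.trans_le hk1
        have hrH' : ((X'.deleteEdge x y).thrGraph c).Reachable x y :=
          reachable_of_adj_reachable htrans hrH
        have : c ≤ (X'.deleteEdge x y).conn x y :=
          ((X'.deleteEdge x y).conn_ge_iff x y c hc0).mpr ⟨hxyne, hrH'⟩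
        rw [hw'] at hcle'
        linarith
  -- strong edges have the same weight
  have hwS : ∀ x y, X.StrongEdge x y → X'.υ x y = X.υ x y := by
    intro x y h
    refine hυ' x y ?_
    rintro (⟨rfl, rfl⟩ | ⟨rfl, rfl⟩)
    · exact hnSab h
    · exact hnSba h
  -- minInc agrees
  have hminInc : ∀ v, X'.minInc v = X.minInc v := by
    intro v
    unfold minInc
    congr 1
    ext w
    constructor
    · rintro ⟨c, h, rfl⟩
      have hs := (hSE v c).mpr h
      exact ⟨c, hs, (hwS v c hs)⟩
    · rintro ⟨c, h, rfl⟩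
      exact ⟨c, (hSE v c).mp h, (hwS v c h).symm⟩
  have hweight : ∀ D : Finset V, X'.weight D = X.weight D := by
    intro D; unfold weight; exact Finset.sum_congr rfl fun v _ => hminInc v
  have hSDS : ∀ D : Finset V, X'.IsSDS D ↔ X.IsSDS D := by
    intro D
    unfold IsSDS
    constructor
    · intro h v hv
      obtain ⟨u, hu, hs⟩ := h v hv
      exact ⟨u, hu, (hSE u v).mpr hs⟩
    · intro h v hv
      obtain ⟨u, hu, hs⟩ := h v hv
      exact ⟨u, hu, (hSE u v).mp hs⟩
  have hMSDS : ∀ D : Finset V, X'.IsMinimalSDS D ↔ X.IsMinimalSDS D := by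
    intro D
    unfold IsMinimalSDS
    rw [hSDS]
    refine and_congr_right fun _ => ?_
    exact forall₂_congr fun v _ => not_congr (hSDS _)
  have hsd : ∀ u, X'.sd u = X.sd u := by
    intro u
    unfold sd
    congr 1
    ext w
    constructor
    · rintro ⟨D, h1, h2, rfl⟩
      exact ⟨D, (hMSDS D).mp h1, h2, hweight D⟩
    · rintro ⟨D, h1, h2, rfl⟩
      exact ⟨D, (hMSDS D).mpr h1, h2, (hweight D).symm⟩
  unfold SDI
  exact Finset.sum_congr rfl fun u _ => hsd u
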